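/- Let X be a transitive subshift with exactly two minimal subsystems, of which i > 0 are infinite. Then liminf_{n→∞} (c_X(n) − (i+1)n) > −∞. -/

import Mathlib

open Filter Topology MeasureTheory

variable {A : Type*} {B : Type*}

/-- The shift by `m` on bi-infinite sequences. -/
def shiftBy (m : ℤ) (x : ℤ → A) : ℤ → A := fun i => x (i + m)

/-- The orbit closure of a point. -/
def orbitClosure [TopologicalSpace A] (x : ℤ → A) : Set (ℤ → A) :=
  closure {y | ∃ m : ℤ, y = shiftBy m x}

/-- A set of sequences invariant under all shifts. -/
def ShiftInvariant (X : Set (ℤ → A)) : Prop := ∀ m : ℤ, ∀ y ∈ X, shiftBy m y ∈ X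

/-- A subshift: closed and shift-invariant. -/
def IsSubshift [TopologicalSpace A] (X : Set (ℤ → A)) : Prop :=
  IsClosed X ∧ ShiftInvariant X

/-- The word `w` occurs in `x` at position `i`. -/
def occursAt (x : ℤ → A) (w : List A) (i : ℤ) : Prop :=
  ∀ k : Fin w.length, x (i + (k.val : ℤ)) = w.get k

/-- The word `w` occurs somewhere in some point of `X`. -/
def WordIn (X : Set (ℤ → A)) (w : List A) : Prop :=
  ∃ x ∈ X, ∃ i : ℤ, occursAt x w i

/-- The language of `X` in length `n`. -/
def langOf (X : Set (ℤ → A)) (n : ℕ) : Set (List A) :=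
  {w | w.length = n ∧ WordIn X w}

/-- The complexity function of `X`. -/
noncomputable def complexity (X : Set (ℤ → A)) (n : ℕ) : ℕ := (langOf X n).ncard

/-- `w` is right-special in `X`. -/
def RightSpecial (X : Set (ℤ → A)) (w : List A) : Prop :=
  ∃ a b : A, a ≠ b ∧ WordIn X (w ++ [a]) ∧ WordIn X (w ++ [b])

/-- `w` is left-special in `X`. -/
def LeftSpecial (X : Set (ℤ → A)) (w : List A) : Prop :=
  ∃ a b : A, a ≠ b ∧ WordIn X (a :: w) ∧ WordIn X (b :: w)

/-- The set of right-special words of length `n`. -/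
def RS (X : Set (ℤ → A)) (n : ℕ) : Set (List A) :=
  {w | w.length = n ∧ RightSpecial X w}

/-- The length-`ℓ` word of `x` starting at position `i`. -/
def wordAt (x : ℤ → A) (i : ℤ) (ℓ : ℕ) : List A :=
  List.ofFn (fun t : Fin ℓ => x (i + (t.val : ℤ)))

/-- `x` is a recurrent point: every word in it occurs infinitely often. -/
def RecurrentPt (x : ℤ → A) : Prop :=
  ∀ n : ℕ, ∀ i N : ℤ, ∃ j : ℤ, N ≤ j ∧ ∀ k : ℕ, k < n → x (j + k) = x (i + k)

/-- `x` is eventually periodic to the right. -/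
def EventuallyPeriodicRight (x : ℤ → A) : Prop :=
  ∃ p : ℤ, 0 < p ∧ ∃ N : ℤ, ∀ i : ℤ, N < i → x (i + p) = x i

/-- `x` is eventually periodic to the left. -/
def EventuallyPeriodicLeft (x : ℤ → A) : Prop :=
  ∃ p : ℤ, 0 < p ∧ ∃ N : ℤ, ∀ i : ℤ, i < N → x (i - p) = x i

/-- `M` is a minimal subsystem of `X`. -/
def MinimalSubsystem [TopologicalSpace A] (X M : Set (ℤ → A)) : Prop :=
  M ⊆ X ∧ M.Nonempty ∧ IsClosed M ∧ ShiftInvariant M ∧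
    ∀ M' ⊆ M, M'.Nonempty → IsClosed M' → ShiftInvariant M' → M' = M

/-- `x` is a generic point for the measure `μ`. -/
def GenericFor [TopologicalSpace A] [MeasurableSpace A] (x : ℤ → A)
    (μ : Measure (ℤ → A)) : Prop :=
  ∀ f : (ℤ → A) → ℝ, Continuous f →
    Tendsto (fun N : ℕ => (∑ i ∈ Finset.range N, f (shiftBy i x)) / (N : ℝ)) atTop
      (𝓝 (∫ y, f y ∂μ))

/-- `μ` is a generic measure for `X`. -/
def GenericMeasure [TopologicalSpace A] [MeasurableSpace A] (X : Set (ℤ → A))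
    (μ : Measure (ℤ → A)) : Prop :=
  ∃ x ∈ X, GenericFor x μ

section Dev
variable {A : Type*}

@[simp] lemma wordAt_length (x : ℤ → A) (i : ℤ) (ℓ : ℕ) : (wordAt x i ℓ).length = ℓ := by
  simp [wordAt]

lemma wordAt_get (x : ℤ → A) (i : ℤ) (ℓ : ℕ) (k : Fin (wordAt x i ℓ).length) :
    (wordAt x i ℓ).get k = x (i + (k.val : ℤ)) := by
  rw [List.get_eq_getElem]; simp [wordAt]

lemma occursAt_wordAt (x : ℤ → A) (i : ℤ) (ℓ : ℕ) : occursAt x (wordAt x i ℓ) i := by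
  intro k
  rw [wordAt_get]

lemma occursAt_iff_wordAt {x : ℤ → A} {w : List A} {i : ℤ} :
    occursAt x w i ↔ wordAt x i w.length = w := by
  constructor
  · intro h
    apply List.ext_get (by simp)
    intro t h1 h2
    rw [wordAt_get]
    exact h ⟨t, h2⟩
  · intro h k
    rw [List.get_of_eq h.symm k, wordAt_get]

lemma wordIn_of_mem {X : Set (ℤ → A)} {x : ℤ → A} (hx : x ∈ X) (i : ℤ) (ℓ : ℕ) :
    WordIn X (wordAt x i ℓ) := ⟨x, hx, i, occursAt_wordAt x i ℓ⟩

lemma wordIn_mono {X Y : Set (ℤ → A)} (h : X ⊆ Y) {w : List A} (hw : WordIn X w) :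
    WordIn Y w := by
  obtain ⟨x, hx, i, hocc⟩ := hw
  exact ⟨x, h hx, i, hocc⟩

lemma wordAt_succ_snoc (x : ℤ → A) (i : ℤ) (ℓ : ℕ) :
    wordAt x i (ℓ + 1) = wordAt x i ℓ ++ [x (i + ℓ)] := by
  apply List.ext_get (by simp)
  intro t h1 h2
  rw [wordAt_get]
  rcases lt_or_ge t ℓ with ht | ht
  · rw [List.get_eq_getElem, List.getElem_append_left (by simpa using ht)]; simp [wordAt]
  · have ht' : t = ℓ := by simp at h1; omega
    subst ht'
    rw [List.get_eq_getElem, List.getElem_append_right (by simp)]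
    simp

lemma wordAt_succ_cons (x : ℤ → A) (i : ℤ) (ℓ : ℕ) :
    wordAt x i (ℓ + 1) = x i :: wordAt x (i + 1) ℓ := by
  apply List.ext_get (by simp)
  intro t h1 h2
  rw [wordAt_get]
  rcases Nat.eq_zero_or_pos t with ht | ht
  · subst ht; simp
  · obtain ⟨s, rfl⟩ : ∃ s, t = s + 1 := ⟨t - 1, by omega⟩
    simp only [List.get_cons_succ]
    rw [wordAt_get]
    congr 1
    push_cast
    ring

lemma occursAt_cons {x : ℤ → A} {b : A} {v : List A} {i : ℤ} (h : occursAt x (b :: v) i) :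
    occursAt x v (i + 1) := by
  intro k
  have := h ⟨k.val + 1, by simp⟩
  simp only [List.get_cons_succ] at this
  rw [← this]
  congr 1
  push_cast
  ring

lemma wordIn_cons {X : Set (ℤ → A)} {b : A} {v : List A} (h : WordIn X (b :: v)) :
    WordIn X v := by
  obtain ⟨x, hx, i, hocc⟩ := h
  exact ⟨x, hx, i + 1, occursAt_cons hocc⟩

lemma occursAt_take {x : ℤ → A} {w : List A} {i : ℤ} (h : occursAt x w i) (m : ℕ) :
    occursAt x (w.take m) i := by
  intro k
  have hk : k.val < w.length := by have := k.isLt; simp at this; omega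
  have h2 := h ⟨k.val, hk⟩
  simp only [List.get_eq_getElem, Fin.val_mk] at h2 ⊢
  rw [List.getElem_take]
  exact h2

lemma occursAt_prefix {x : ℤ → A} {w : List A} {a : A} {i : ℤ}
    (h : occursAt x (w ++ [a]) i) : occursAt x w i := by
  have := occursAt_take h w.length
  rwa [List.take_left] at this

lemma wordIn_prefix {X : Set (ℤ → A)} {w : List A} {a : A} (h : WordIn X (w ++ [a])) :
    WordIn X w := by
  obtain ⟨x, hx, i, hocc⟩ := h
  exact ⟨x, hx, i, occursAt_prefix hocc⟩

lemma wordIn_take {X : Set (ℤ → A)} {w : List A} (h : WordIn X w) (m : ℕ) :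
    WordIn X (w.take m) := by
  obtain ⟨x, hx, i, hocc⟩ := h
  exact ⟨x, hx, i, occursAt_take hocc m⟩

lemma wordIn_exists_ext {X : Set (ℤ → A)} {w : List A} (h : WordIn X w) :
    ∃ a, WordIn X (w ++ [a]) := by
  obtain ⟨x, hx, i, hocc⟩ := h
  refine ⟨x (i + w.length), x, hx, i, ?_⟩
  rw [occursAt_iff_wordAt] at hocc ⊢
  simp only [List.length_append, List.length_singleton]
  rw [wordAt_succ_snoc, hocc]

end Dev
section Dev2
variable {A : Type*}

lemma langOf_finite [Finite A] (X : Set (ℤ → A)) (n : ℕ) : (langOf X n).Finite := by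
  apply Set.Finite.subset (Set.finite_range (fun f : Fin n → A => List.ofFn f))
  rintro w ⟨hlen, -⟩
  refine ⟨fun k => w.get (Fin.cast hlen.symm k), ?_⟩
  apply List.ext_get (by simp [hlen])
  intro t h1 h2
  rw [List.get_ofFn]
  rfl

noncomputable def langF [Finite A] (X : Set (ℤ → A)) (n : ℕ) : Finset (List A) :=
  (langOf_finite X n).toFinset

lemma mem_langF [Finite A] {X : Set (ℤ → A)} {n : ℕ} {w : List A} :
    w ∈ langF X n ↔ w.length = n ∧ WordIn X w := by
  simp [langF, langOf]

lemma complexity_eq_card [Finite A] (X : Set (ℤ → A)) (n : ℕ) :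
    complexity X n = (langF X n).card :=
  Set.ncard_eq_toFinset_card _ _

lemma snoc_inj {w w' : List A} {a b : A} (h : w ++ [a] = w' ++ [b])
    (hl : w.length = w'.length) : w = w' ∧ a = b := by
  obtain ⟨h1, h2⟩ := List.append_inj h hl
  exact ⟨h1, by simpa using h2⟩

/-- The key counting lemma. -/
lemma cnt [Finite A] [DecidableEq A] (X : Set (ℤ → A)) (n : ℕ) (S : Finset (List A × A))
    (hS : ∀ p ∈ S, p.1.length = n ∧ WordIn X p.1 ∧ WordIn X (p.1 ++ [p.2])) :
    complexity X n + S.card ≤ complexity X (n + 1) + (S.image Prod.fst).card := by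
  classical
  set Ln := langF X n with hLn
  set Ln1 := langF X (n+1) with hLn1
  have hext : ∀ w ∈ Ln, ∃ a, w ++ [a] ∈ Ln1 := by
    intro w hw
    rw [mem_langF] at hw
    obtain ⟨a, ha⟩ := wordIn_exists_ext hw.2
    exact ⟨a, mem_langF.mpr ⟨by simp [hw.1], ha⟩⟩
  set F : List A → List A := fun w =>
    if h : w ∈ Ln then w ++ [Classical.choose (hext w h)] else w with hF
  have hFmem : ∀ w ∈ Ln, F w ∈ Ln1 := by
    intro w hw
    simp only [hF, dif_pos hw]
    exact Classical.choose_spec (hext w hw)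
  have hlenLn : ∀ w ∈ Ln, w.length = n := fun w hw => (mem_langF.mp hw).1
  set fsts := S.image Prod.fst with hfsts
  set B := S.image (fun p : List A × A => p.1 ++ [p.2]) with hB
  set C := (Ln \ fsts).image F with hC
  have hBcard : B.card = S.card := by
    apply Finset.card_image_of_injOn
    intro p hp q hq he
    have := snoc_inj he (by rw [(hS p hp).1, (hS q hq).1])
    exact Prod.ext this.1 this.2
  have hCcard : C.card = (Ln \ fsts).card := by
    apply Finset.card_image_of_injOn
    intro w hw w' hw' he
    have hw1 : w ∈ Ln := (Finset.mem_sdiff.mp hw).1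
    have hw2 : w' ∈ Ln := (Finset.mem_sdiff.mp hw').1
    simp only [hF, dif_pos hw1, dif_pos hw2] at he
    exact (snoc_inj he (by rw [hlenLn w hw1, hlenLn w' hw2])).1
  have hdisj : Disjoint B C := by
    rw [Finset.disjoint_left]
    intro u huB huC
    obtain ⟨p, hp, hpu⟩ := Finset.mem_image.mp huB
    obtain ⟨w, hw, hwu⟩ := Finset.mem_image.mp huC
    have hw1 : w ∈ Ln := (Finset.mem_sdiff.mp hw).1
    have hw2 : w ∉ fsts := (Finset.mem_sdiff.mp hw).2
    rw [hF] at hwu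
    simp only [dif_pos hw1] at hwu
    have : p.1 = w := (snoc_inj (hpu.trans hwu.symm)
      (by rw [(hS p hp).1, hlenLn w hw1])).1
    exact hw2 (Finset.mem_image.mpr ⟨p, hp, this⟩)
  have hsub : B ∪ C ⊆ Ln1 := by
    intro u hu
    rcases Finset.mem_union.mp hu with hu | hu
    · obtain ⟨p, hp, hpu⟩ := Finset.mem_image.mp hu
      obtain ⟨h1, h2, h3⟩ := hS p hp
      exact hpu ▸ mem_langF.mpr ⟨by simp [h1], h3⟩
    · obtain ⟨w, hw, hwu⟩ := Finset.mem_image.mp hu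
      exact hwu ▸ hFmem w (Finset.mem_sdiff.mp hw).1
  have key : (B ∪ C).card ≤ Ln1.card := Finset.card_le_card hsub
  rw [Finset.card_union_of_disjoint hdisj, hBcard, hCcard] at key
  have h1 : Ln.card ≤ (Ln \ fsts).card + fsts.card := Finset.card_le_card_sdiff_add_card
  rw [complexity_eq_card X n, complexity_eq_card X (n+1), ← hLn, ← hLn1]
  omega

end Dev2
section Dev3
variable {A : Type*}

lemma shiftBy_shiftBy (m m' : ℤ) (y : ℤ → A) :
    shiftBy m (shiftBy m' y) = shiftBy (m' + m) y := by
  funext t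
  simp only [shiftBy]
  congr 1
  ring

@[simp] lemma shiftBy_zero (y : ℤ → A) : shiftBy 0 y = y := by
  funext t
  simp [shiftBy]

lemma occursAt_shiftBy {z : ℤ → A} {w : List A} {j : ℤ} (h : occursAt z w j) (m : ℤ) :
    occursAt (shiftBy m z) w (j - m) := by
  intro k
  have := h k
  rw [← this]
  simp only [shiftBy]
  congr 1
  ring

lemma occursAt_drop {x : ℤ → A} {w : List A} {i : ℤ} (h : occursAt x w i) (m : ℕ) :
    occursAt x (w.drop m) (i + m) := by
  intro k
  have hk : m + k.val < w.length := by have := k.isLt; simp at this; omega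
  have h2 := h ⟨m + k.val, hk⟩
  simp only [List.get_eq_getElem, Fin.val_mk] at h2 ⊢
  rw [List.getElem_drop]
  rw [← h2]
  congr 1
  push_cast
  ring

lemma wordIn_drop {X : Set (ℤ → A)} {w : List A} (h : WordIn X w) (m : ℕ) :
    WordIn X (w.drop m) := by
  obtain ⟨x, hx, i, hocc⟩ := h
  exact ⟨x, hx, i + m, occursAt_drop hocc m⟩

lemma occursAt_sub {z : ℤ → A} {w : List A} {i : ℤ} (h : occursAt z w i)
    (a : ℤ) (ℓ : ℕ) (h1 : i ≤ a) (h2 : a + ℓ ≤ i + w.length) :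
    wordAt z a ℓ = (w.drop (a - i).toNat).take ℓ := by
  have hocc2 : occursAt z ((w.drop (a - i).toNat).take ℓ) a := by
    have := occursAt_take (occursAt_drop h (a - i).toNat) ℓ
    have he : i + ((a - i).toNat : ℤ) = a := by omega
    rwa [he] at this
  rw [occursAt_iff_wordAt] at hocc2
  rw [← hocc2]
  congr 1
  simp only [List.length_take, List.length_drop]
  omega

/-- Membership in a closed shift-invariant set from all central words being in the language. -/
lemma mem_of_forall_wordIn [TopologicalSpace A] [DiscreteTopology A]
    {M : Set (ℤ → A)} (hcl : IsClosed M) (hinv : ShiftInvariant M) {y : ℤ → A}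
    (h : ∀ k : ℕ, WordIn M (wordAt y (-(k : ℤ)) (2 * k + 1))) : y ∈ M := by
  have hz : ∀ k : ℕ, ∃ z ∈ M, ∀ t : ℤ, -(k : ℤ) ≤ t → t ≤ k → z t = y t := by
    intro k
    obtain ⟨m, hm, j, hocc⟩ := h k
    refine ⟨shiftBy (j + k) m, hinv _ _ hm, ?_⟩
    intro t ht1 ht2
    have hu : (t + k).toNat < (wordAt y (-(k : ℤ)) (2 * k + 1)).length := by
      simp only [wordAt_length]; omega
    have h2 := hocc ⟨(t + k).toNat, hu⟩
    rw [wordAt_get] at h2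
    simp only [Fin.val_mk] at h2
    simp only [shiftBy]
    rw [show t + (j + (k : ℤ)) = j + (((t + k).toNat : ℤ)) by omega, h2]
    congr 1
    omega
  choose z hzM hzag using hz
  apply hcl.mem_of_tendsto (b := atTop) ?_ (Filter.Eventually.of_forall hzM)
  rw [tendsto_pi_nhds]
  intro t
  refine Filter.Tendsto.congr' ?_ tendsto_const_nhds
  filter_upwards [Filter.eventually_ge_atTop t.natAbs] with k hk
  exact (hzag k t (by omega) (by omega)).symm

/-- Words in an orbit closure occur in the orbit's base point. -/
lemma wordIn_orbitClosure [TopologicalSpace A] [DiscreteTopology A] {x : ℤ → A} {w : List A}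
    (h : WordIn (orbitClosure x) w) : ∃ j : ℤ, occursAt x w j := by
  obtain ⟨y, hy, j, hocc⟩ := h
  have hU : IsOpen {z : ℤ → A | ∀ k : Fin w.length, z (j + (k.val : ℤ)) = w.get k} := by
    have he : {z : ℤ → A | ∀ k : Fin w.length, z (j + (k.val : ℤ)) = w.get k} =
        ⋂ k : Fin w.length, (fun z : ℤ → A => z (j + (k.val : ℤ))) ⁻¹' {w.get k} := by
      ext z; simp
    rw [he]
    exact isOpen_iInter_of_finite fun k =>
      (continuous_apply (j + (k.val : ℤ))).isOpen_preimage _ (isOpen_discrete _)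
  rw [orbitClosure, mem_closure_iff] at hy
  obtain ⟨z, hzU, hzorb⟩ := hy _ hU hocc
  obtain ⟨m, rfl⟩ := hzorb
  refine ⟨j + m, fun k => ?_⟩
  have h2 := hzU k
  simp only [shiftBy] at h2
  rw [← h2]
  congr 1
  ring

/-- Minimal subsystems are determined by language membership: distinct ones have
eventually disjoint languages. -/
lemma lang_disjoint [Fintype A] [TopologicalSpace A] [DiscreteTopology A]
    {X M1 M2 : Set (ℤ → A)} (h1 : MinimalSubsystem X M1) (h2 : MinimalSubsystem X M2)
    (hne : M1 ≠ M2) :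
    ∃ n0 : ℕ, ∀ n, n0 ≤ n → ∀ w : List A, w.length = n →
      WordIn M1 w → WordIn M2 w → False := by
  suffices hs : ∃ n0 : ℕ, ∀ w : List A, w.length = n0 → WordIn M1 w → WordIn M2 w → False by
    obtain ⟨n0, hn0⟩ := hs
    refine ⟨n0, fun n hn w hw hw1 hw2 => ?_⟩
    exact hn0 (w.take n0) (by simp [hw]; omega) (wordIn_take hw1 n0) (wordIn_take hw2 n0)
  by_contra hcon
  push_neg at hcon
  have hex : ∀ k : ℕ, ∃ z ∈ M1, ∀ a : ℤ, ∀ ℓ : ℕ, -(k : ℤ) ≤ a → a + ℓ ≤ (k : ℤ) + 1 →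
      WordIn M2 (wordAt z a ℓ) := by
    intro k
    obtain ⟨w, hwlen, hw1, hw2, -⟩ := hcon (2 * k + 1)
    obtain ⟨m, hm, j, hocc⟩ := hw1
    refine ⟨shiftBy (j + k) m, h1.2.2.2.1 _ _ hm, ?_⟩
    have hocc2 : occursAt (shiftBy (j + k) m) w (-(k : ℤ)) := by
      have := occursAt_shiftBy hocc (j + k)
      rwa [show j - (j + (k : ℤ)) = -(k : ℤ) by ring] at this
    intro a ℓ ha1 ha2
    rw [occursAt_sub hocc2 a ℓ ha1 (by rw [hwlen]; push_cast; omega)]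
    exact wordIn_take (wordIn_drop hw2 _) _
  choose z hzM hzword using hex
  obtain ⟨y, hyM1, φ, hφ, hconv⟩ :=
    (h1.2.2.1.isCompact).tendsto_subseq (x := z) hzM
  have hyM2 : y ∈ M2 := by
    apply mem_of_forall_wordIn h2.2.2.1 h2.2.2.2.1
    intro k
    have hag : ∀ᶠ nn in atTop, ∀ u : Fin (2 * k + 1),
        z (φ nn) (-(k : ℤ) + u) = y (-(k : ℤ) + u) := by
      rw [Filter.eventually_all]
      intro u
      have ht := tendsto_pi_nhds.mp hconv (-(k : ℤ) + u)
      exact ht ((isOpen_discrete {y (-(k : ℤ) + (u.val : ℤ))}).mem_nhds rfl)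
    obtain ⟨nn, hnn1, hnn2⟩ := (hag.and (Filter.eventually_ge_atTop k)).exists
    have hK : (k : ℤ) ≤ (φ nn : ℤ) := by
      have := hφ.le_apply (x := nn)
      exact_mod_cast le_trans hnn2 this
    have heq : wordAt y (-(k : ℤ)) (2 * k + 1) = wordAt (z (φ nn)) (-(k : ℤ)) (2 * k + 1) := by
      apply List.ext_get (by simp)
      intro t ht1 ht2
      rw [wordAt_get, wordAt_get]
      exact (hnn1 ⟨t, by simpa using ht1⟩).symm
    rw [heq]
    exact hzword (φ nn) (-(k : ℤ)) (2 * k + 1) (by omega) (by push_cast; omega)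
  -- intersection nonempty forces equality
  apply hne
  have hsub1 : M1 ∩ M2 ⊆ M1 := Set.inter_subset_left
  have hmin1 := h1.2.2.2.2 (M1 ∩ M2) hsub1 ⟨y, hyM1, hyM2⟩
    (h1.2.2.1.inter h2.2.2.1) (fun m yy hyy => ⟨h1.2.2.2.1 m yy hyy.1, h2.2.2.2.1 m yy hyy.2⟩)
  have hmin2 := h2.2.2.2.2 (M1 ∩ M2) Set.inter_subset_right ⟨y, hyM1, hyM2⟩
    (h1.2.2.1.inter h2.2.2.1) (fun m yy hyy => ⟨h1.2.2.2.1 m yy hyy.1, h2.2.2.2.1 m yy hyy.2⟩)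
  exact hmin1.symm.trans hmin2

end Dev3
section Dev4
variable {A : Type*}

/-- Morse–Hedlund-type lemma: an infinite minimal subsystem has a right-special word
of every positive length. -/
lemma exists_rightSpecial_of_infinite [Fintype A] [TopologicalSpace A] [DiscreteTopology A]
    {X M : Set (ℤ → A)} (hM : MinimalSubsystem X M) (hinf : M.Infinite) (n : ℕ) (hn : 1 ≤ n) :
    ∃ (s : List A) (α β : A), s.length = n ∧ α ≠ β ∧
      WordIn M (s ++ [α]) ∧ WordIn M (s ++ [β]) := by
  by_contra hcon
  push_neg at hcon
  obtain ⟨z, hz⟩ := hM.2.1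
  -- determinism
  have hdet : ∀ s s' : ℤ, wordAt z s n = wordAt z s' n → z (s + n) = z (s' + n) := by
    intro s s' he
    by_contra hne2
    apply hcon (wordAt z s n) (z (s + n)) (z (s' + n)) (wordAt_length z s n) hne2
    · rw [← wordAt_succ_snoc]
      exact wordIn_of_mem hz s (n + 1)
    · rw [he, ← wordAt_succ_snoc]
      exact wordIn_of_mem hz s' (n + 1)
  -- pigeonhole
  obtain ⟨j1, j2, hlt, hweq⟩ : ∃ j1 j2 : ℕ, j1 < j2 ∧
      wordAt z (j1 : ℤ) n = wordAt z (j2 : ℤ) n := by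
    set g : ℕ → (Fin n → A) := fun j t => z ((j : ℤ) + (t.val : ℤ)) with hg
    obtain ⟨a, b, hne12, hgeq⟩ := Finite.exists_ne_map_eq_of_infinite g
    have hab : wordAt z (a : ℤ) n = wordAt z (b : ℤ) n := congrArg List.ofFn hgeq
    rcases hne12.lt_or_gt with h | h
    exacts [⟨a, b, h, hab⟩, ⟨b, a, h, hab.symm⟩]
  have key : ∀ s : ℤ, wordAt z (s + 1) n = (wordAt z s n ++ [z (s + n)]).tail := by
    intro s
    conv_rhs => rw [← wordAt_succ_snoc, wordAt_succ_cons]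
    rw [List.tail_cons]
  have hhead : ∀ i : ℤ, (wordAt z i n).head? = some (z i) := by
    intro i
    obtain ⟨n', rfl⟩ : ∃ n', n = n' + 1 := ⟨n - 1, by omega⟩
    rw [wordAt_succ_cons, List.head?_cons]
  have hprop : ∀ d : ℕ, wordAt z ((j1 : ℤ) + d) n = wordAt z ((j2 : ℤ) + d) n := by
    intro d
    induction d with
    | zero => simpa using hweq
    | succ d ih =>
      have hl := hdet ((j1 : ℤ) + d) ((j2 : ℤ) + d) ih
      rw [show ((j1 : ℤ) + ((d + 1 : ℕ) : ℤ)) = ((j1 : ℤ) + d) + 1 by push_cast; ring,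
          show ((j2 : ℤ) + ((d + 1 : ℕ) : ℤ)) = ((j2 : ℤ) + d) + 1 by push_cast; ring,
          key, key, ih, hl]
  have hpt : ∀ d : ℕ, z ((j1 : ℤ) + d) = z ((j2 : ℤ) + d) := by
    intro d
    have h3 := congrArg List.head? (hprop d)
    rwa [hhead, hhead, Option.some_inj] at h3
  obtain ⟨p, hppos, hpz⟩ : ∃ p : ℕ, 0 < p ∧ (p : ℤ) = (j2 : ℤ) - (j1 : ℤ) :=
    ⟨j2 - j1, by omega, by omega⟩
  have hper : ∀ s : ℤ, (j1 : ℤ) ≤ s → z (s + p) = z s := by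
    intro s hs
    have hd := hpt (s - j1).toNat
    rw [show (j1 : ℤ) + ((s - (j1 : ℤ)).toNat : ℤ) = s by omega] at hd
    rw [show (j2 : ℤ) + ((s - (j1 : ℤ)).toNat : ℤ) = s + p by omega] at hd
    exact hd.symm
  have hperk : ∀ k : ℕ, ∀ s : ℤ, (j1 : ℤ) ≤ s → z (s + k * p) = z s := by
    intro k
    induction k with
    | zero => intro s _; simp
    | succ k ih =>
      intro s hs
      rw [show s + ((k + 1 : ℕ) : ℤ) * p = (s + k * p) + p by push_cast; ring]
      have hkp : (0 : ℤ) ≤ (k : ℤ) * (p : ℤ) := by positivity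
      rw [hper (s + k * p) (by omega)]
      exact ih s hs
  have heval : ∀ c : ℤ, 0 ≤ c → z ((j1 : ℤ) + c % (p : ℤ)) = z ((j1 : ℤ) + c) := by
    intro c hc
    have hk : 0 ≤ c / (p : ℤ) := Int.ediv_nonneg hc (by positivity)
    have hnn : 0 ≤ c % (p : ℤ) := Int.emod_nonneg c (by exact_mod_cast hppos.ne')
    have h2 := hperk (c / (p : ℤ)).toNat ((j1 : ℤ) + c % (p : ℤ)) (by omega)
    rw [show (j1 : ℤ) + c % (p : ℤ) + ((c / (p : ℤ)).toNat : ℤ) * (p : ℤ) = (j1 : ℤ) + c by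
      rw [Int.toNat_of_nonneg hk]; linear_combination Int.emod_add_mul_ediv c (p : ℤ)] at h2
    exact h2.symm
  set y : ℤ → A := fun t => z ((j1 : ℤ) + t % (p : ℤ)) with hy
  have hyword : ∀ a : ℤ, ∀ ℓ : ℕ, wordAt y a ℓ = wordAt z ((j1 : ℤ) + a % (p : ℤ)) ℓ := by
    intro a ℓ
    apply List.ext_get (by simp)
    intro t h1 h2
    rw [wordAt_get, wordAt_get]
    show z ((j1 : ℤ) + (a + t) % (p : ℤ)) = z ((j1 : ℤ) + a % (p : ℤ) + t)
    have hnn : 0 ≤ a % (p : ℤ) := Int.emod_nonneg a (by exact_mod_cast hppos.ne')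
    calc z ((j1 : ℤ) + (a + t) % (p : ℤ))
        = z ((j1 : ℤ) + (a % (p : ℤ) + t) % (p : ℤ)) := by rw [Int.emod_add_emod]
      _ = z ((j1 : ℤ) + (a % (p : ℤ) + t)) := heval _ (by omega)
      _ = z ((j1 : ℤ) + a % (p : ℤ) + t) := by rw [add_assoc]
  have hyM : y ∈ M := by
    apply mem_of_forall_wordIn hM.2.2.1 hM.2.2.2.1
    intro k
    rw [hyword]
    exact wordIn_of_mem hz _ _
  have hshift : ∀ m : ℤ, shiftBy m y = shiftBy (m % (p : ℤ)) y := by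
    intro m
    funext t
    show z ((j1 : ℤ) + (t + m) % (p : ℤ)) = z ((j1 : ℤ) + (t + m % (p : ℤ)) % (p : ℤ))
    congr 2
    conv_lhs => rw [Int.add_emod t m]
    conv_rhs => rw [Int.add_emod t (m % (p : ℤ)), Int.emod_emod_of_dvd m dvd_rfl]
  have horb : {y' | ∃ m : ℤ, y' = shiftBy m y}.Finite := by
    apply Set.Finite.subset (Set.finite_range (fun r : Fin p => shiftBy ((r.val : ℕ) : ℤ) y))
    rintro y' ⟨m, rfl⟩
    have hnn : 0 ≤ m % (p : ℤ) := Int.emod_nonneg m (by exact_mod_cast hppos.ne')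
    have hlt2 : m % (p : ℤ) < (p : ℤ) := Int.emod_lt_of_pos m (by exact_mod_cast hppos)
    refine ⟨⟨(m % (p : ℤ)).toNat, by zify [Int.toNat_of_nonneg hnn]; exact hlt2⟩, ?_⟩
    show shiftBy _ y = shiftBy m y
    rw [hshift m]
    simp only [Fin.val_mk, Int.toNat_of_nonneg hnn]
  have hMeq : {y' | ∃ m : ℤ, y' = shiftBy m y} = M := by
    apply hM.2.2.2.2
    · rintro y' ⟨m, rfl⟩
      exact hM.2.2.2.1 m y hyM
    · exact ⟨y, 0, (shiftBy_zero y).symm⟩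
    · exact horb.isClosed
    · rintro m y' ⟨m', rfl⟩
      exact ⟨m' + m, (shiftBy_shiftBy m m' y)⟩
  exact hinf (hMeq ▸ horb)

end Dev4
section Dev5
variable {A : Type*}

lemma fcard2 {α : Type*} [DecidableEq α] (a b : α) : ({a, b} : Finset α).card ≤ 2 :=
  (Finset.card_insert_le _ _).trans (by simp)

lemma fcard3 {α : Type*} [DecidableEq α] (a b c : α) : ({a, b, c} : Finset α).card ≤ 3 :=
  (Finset.card_insert_le _ _).trans (Nat.add_le_add_right (fcard2 b c) 1)

/-- Sliding a window along a point, staying in an absorbing language. -/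
lemma slide {X M : Set (ℤ → A)} {n : ℕ}
    (habs : ∀ w (a : A), w.length = n → WordIn M w → WordIn X (w ++ [a]) → WordIn M (w ++ [a]))
    {z : ℤ → A} (hz : z ∈ X) {t : ℤ} (hw : WordIn M (wordAt z t n)) :
    ∀ d : ℕ, WordIn M (wordAt z (t + (d : ℤ)) n) := by
  intro d
  induction d with
  | zero => simpa using hw
  | succ d ih =>
    have h1 : WordIn X (wordAt z (t + (d : ℤ)) n ++ [z (t + (d : ℤ) + n)]) := by
      rw [← wordAt_succ_snoc]
      exact wordIn_of_mem hz _ _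
    have h2 := habs _ _ (wordAt_length z _ n) ih h1
    rw [← wordAt_succ_snoc, wordAt_succ_cons] at h2
    have h3 := wordIn_cons h2
    rw [show (t + ((d + 1 : ℕ) : ℤ)) = t + (d : ℤ) + 1 by push_cast; ring]
    exact h3

/-- Main step: with two minimal subsystems, k of which infinite, complexity grows
by at least k+1 eventually. -/
lemma step_lemma [Fintype A] [TopologicalSpace A] [DiscreteTopology A]
    {x : ℤ → A} {M1 M2 : Set (ℤ → A)}
    (h1 : MinimalSubsystem (orbitClosure x) M1) (h2 : MinimalSubsystem (orbitClosure x) M2)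
    (hne : M1 ≠ M2) (h1inf : M1.Infinite) (k : ℕ)
    (hk : k = 1 ∨ (k = 2 ∧ M2.Infinite)) :
    ∃ n1 : ℕ, ∀ n, n1 ≤ n →
      complexity (orbitClosure x) n + (k + 1) ≤ complexity (orbitClosure x) (n + 1) := by
  classical
  obtain ⟨n0, hdisj⟩ := lang_disjoint h1 h2 hne
  refine ⟨n0 + 1, fun n hn => ?_⟩
  by_contra hlt
  push_neg at hlt
  have hn1 : 1 ≤ n := by omega
  have hxX : x ∈ orbitClosure x := subset_closure ⟨0, (shiftBy_zero x).symm⟩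
  have hdisjn : ∀ w : List A, w.length = n → WordIn M1 w → WordIn M2 w → False :=
    fun w hw => hdisj n (by omega) w hw
  obtain ⟨s1, α1, β1, hs1len, hab1, hs1a, hs1b⟩ :=
    exists_rightSpecial_of_infinite h1 h1inf n hn1
  have hs1M : WordIn M1 s1 := wordIn_prefix hs1a
  have hs1X : WordIn (orbitClosure x) s1 := wordIn_mono h1.1 hs1M
  have hs1aX : WordIn (orbitClosure x) (s1 ++ [α1]) := wordIn_mono h1.1 hs1a
  have hs1bX : WordIn (orbitClosure x) (s1 ++ [β1]) := wordIn_mono h1.1 hs1b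
  have absorb : ∀ M : Set (ℤ → A), MinimalSubsystem (orbitClosure x) M → (M = M1 ∨ M = M2) →
      ∀ w (a : A), w.length = n → WordIn M w → WordIn (orbitClosure x) (w ++ [a]) →
        WordIn M (w ++ [a]) := by
    intro M hM hMor w a hwlen hwM hwX
    by_contra hnotM
    obtain ⟨b, hb⟩ := wordIn_exists_ext hwM
    have hba : a ≠ b := fun h => hnotM (h ▸ hb)
    have hwX' : WordIn (orbitClosure x) w := wordIn_mono hM.1 hwM
    have hbX : WordIn (orbitClosure x) (w ++ [b]) := wordIn_mono hM.1 hb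
    rcases hk with rfl | ⟨rfl, h2inf⟩
    · -- k = 1
      by_cases hws : w = s1
      · subst hws
        have hMM1 : M = M1 := by
          rcases hMor with rfl | rfl
          · rfl
          · exact (hdisjn w hwlen hs1M hwM).elim
        subst hMM1
        have ha1 : a ≠ α1 := fun h => hnotM (h ▸ hs1a)
        have ha2 : a ≠ β1 := fun h => hnotM (h ▸ hs1b)
        set S : Finset (List A × A) := ([(w, a), (w, α1), (w, β1)]).toFinset with hSdef
        have hnd : ([(w, a), (w, α1), (w, β1)] : List (List A × A)).Nodup := by
          simp [List.nodup_cons, Prod.ext_iff]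
          tauto
        have hcardS : S.card = 3 := by
          rw [hSdef, List.toFinset_card_of_nodup hnd]; rfl
        have hfsub : S.image Prod.fst ⊆ {w} := by
          intro u hu
          simp [hSdef] at hu ⊢
          tauto
        have hfst : (S.image Prod.fst).card ≤ 1 :=
          le_trans (Finset.card_le_card hfsub) (by simp)
        have hS : ∀ p ∈ S, p.1.length = n ∧ WordIn (orbitClosure x) p.1 ∧
            WordIn (orbitClosure x) (p.1 ++ [p.2]) := by
          intro p hp
          simp [hSdef] at hp
          rcases hp with rfl | rfl | rfl
          exacts [⟨hwlen, hs1X, hwX⟩, ⟨hwlen, hs1X, hs1aX⟩, ⟨hwlen, hs1X, hs1bX⟩]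
        have hcnt := cnt (orbitClosure x) n S hS
        rw [hcardS] at hcnt
        omega
      · -- w ≠ s1
        set S : Finset (List A × A) := ([(s1, α1), (s1, β1), (w, a), (w, b)]).toFinset with hSdef
        have hnd : ([(s1, α1), (s1, β1), (w, a), (w, b)] : List (List A × A)).Nodup := by
          simp [List.nodup_cons, Prod.ext_iff]
          have := Ne.symm hws
          tauto
        have hcardS : S.card = 4 := by
          rw [hSdef, List.toFinset_card_of_nodup hnd]; rfl
        have hfsub : S.image Prod.fst ⊆ {s1, w} := by
          intro u hu
          simp [hSdef] at hu ⊢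
          tauto
        have hfst : (S.image Prod.fst).card ≤ 2 :=
          le_trans (Finset.card_le_card hfsub) (fcard2 _ _)
        have hS : ∀ p ∈ S, p.1.length = n ∧ WordIn (orbitClosure x) p.1 ∧
            WordIn (orbitClosure x) (p.1 ++ [p.2]) := by
          intro p hp
          simp [hSdef] at hp
          rcases hp with rfl | rfl | rfl | rfl
          exacts [⟨hs1len, hs1X, hs1aX⟩, ⟨hs1len, hs1X, hs1bX⟩, ⟨hwlen, hwX', hwX⟩,
            ⟨hwlen, hwX', hbX⟩]
        have hcnt := cnt (orbitClosure x) n S hS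
        rw [hcardS] at hcnt
        omega
    · -- k = 2
      obtain ⟨s2, α2, β2, hs2len, hab2, hs2a, hs2b⟩ :=
        exists_rightSpecial_of_infinite h2 h2inf n hn1
      have hs2M : WordIn M2 s2 := wordIn_prefix hs2a
      have hs2X : WordIn (orbitClosure x) s2 := wordIn_mono h2.1 hs2M
      have hs2aX : WordIn (orbitClosure x) (s2 ++ [α2]) := wordIn_mono h2.1 hs2a
      have hs2bX : WordIn (orbitClosure x) (s2 ++ [β2]) := wordIn_mono h2.1 hs2b
      have hss : s1 ≠ s2 := fun h => hdisjn s1 hs1len hs1M (h ▸ hs2M)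
      by_cases hws1 : w = s1
      · subst hws1
        have hMM1 : M = M1 := by
          rcases hMor with rfl | rfl
          · rfl
          · exact (hdisjn w hwlen hs1M hwM).elim
        subst hMM1
        have ha1 : a ≠ α1 := fun h => hnotM (h ▸ hs1a)
        have ha2 : a ≠ β1 := fun h => hnotM (h ▸ hs1b)
        set S : Finset (List A × A) :=
          ([(w, a), (w, α1), (w, β1), (s2, α2), (s2, β2)]).toFinset with hSdef
        have hnd : ([(w, a), (w, α1), (w, β1), (s2, α2), (s2, β2)] :
            List (List A × A)).Nodup := by
          simp [List.nodup_cons, Prod.ext_iff]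
          tauto
        have hcardS : S.card = 5 := by
          rw [hSdef, List.toFinset_card_of_nodup hnd]; rfl
        have hfsub : S.image Prod.fst ⊆ {w, s2} := by
          intro u hu
          simp [hSdef] at hu ⊢
          tauto
        have hfst : (S.image Prod.fst).card ≤ 2 :=
          le_trans (Finset.card_le_card hfsub) (fcard2 _ _)
        have hS : ∀ p ∈ S, p.1.length = n ∧ WordIn (orbitClosure x) p.1 ∧
            WordIn (orbitClosure x) (p.1 ++ [p.2]) := by
          intro p hp
          simp [hSdef] at hp
          rcases hp with rfl | rfl | rfl | rfl | rfl
          exacts [⟨hwlen, hs1X, hwX⟩, ⟨hwlen, hs1X, hs1aX⟩, ⟨hwlen, hs1X, hs1bX⟩,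
            ⟨hs2len, hs2X, hs2aX⟩, ⟨hs2len, hs2X, hs2bX⟩]
        have hcnt := cnt (orbitClosure x) n S hS
        rw [hcardS] at hcnt
        omega
      · by_cases hws2 : w = s2
        · subst hws2
          have hMM2 : M = M2 := by
            rcases hMor with rfl | rfl
            · exact (hdisjn w hwlen hwM hs2M).elim
            · rfl
          subst hMM2
          have ha1 : a ≠ α2 := fun h => hnotM (h ▸ hs2a)
          have ha2 : a ≠ β2 := fun h => hnotM (h ▸ hs2b)
          set S : Finset (List A × A) :=
            ([(w, a), (w, α2), (w, β2), (s1, α1), (s1, β1)]).toFinset with hSdef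
          have hnd : ([(w, a), (w, α2), (w, β2), (s1, α1), (s1, β1)] :
              List (List A × A)).Nodup := by
            simp [List.nodup_cons, Prod.ext_iff]
            have := Ne.symm hss
            tauto
          have hcardS : S.card = 5 := by
            rw [hSdef, List.toFinset_card_of_nodup hnd]; rfl
          have hfsub : S.image Prod.fst ⊆ {w, s1} := by
            intro u hu
            simp [hSdef] at hu ⊢
            tauto
          have hfst : (S.image Prod.fst).card ≤ 2 :=
            le_trans (Finset.card_le_card hfsub) (fcard2 _ _)
          have hS : ∀ p ∈ S, p.1.length = n ∧ WordIn (orbitClosure x) p.1 ∧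
              WordIn (orbitClosure x) (p.1 ++ [p.2]) := by
            intro p hp
            simp [hSdef] at hp
            rcases hp with rfl | rfl | rfl | rfl | rfl
            exacts [⟨hwlen, hs2X, hwX⟩, ⟨hwlen, hs2X, hs2aX⟩, ⟨hwlen, hs2X, hs2bX⟩,
              ⟨hs1len, hs1X, hs1aX⟩, ⟨hs1len, hs1X, hs1bX⟩]
          have hcnt := cnt (orbitClosure x) n S hS
          rw [hcardS] at hcnt
          omega
        · set S : Finset (List A × A) :=
            ([(s1, α1), (s1, β1), (s2, α2), (s2, β2), (w, a), (w, b)]).toFinset with hSdef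
          have hnd : ([(s1, α1), (s1, β1), (s2, α2), (s2, β2), (w, a), (w, b)] :
              List (List A × A)).Nodup := by
            simp [List.nodup_cons, Prod.ext_iff]
            have h3 := Ne.symm hws1
            have h4 := Ne.symm hws2
            tauto
          have hcardS : S.card = 6 := by
            rw [hSdef, List.toFinset_card_of_nodup hnd]; rfl
          have hfsub : S.image Prod.fst ⊆ {s1, s2, w} := by
            intro u hu
            simp [hSdef] at hu ⊢
            tauto
          have hfst : (S.image Prod.fst).card ≤ 3 :=
            le_trans (Finset.card_le_card hfsub) (fcard3 _ _ _)
          have hS : ∀ p ∈ S, p.1.length = n ∧ WordIn (orbitClosure x) p.1 ∧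
              WordIn (orbitClosure x) (p.1 ++ [p.2]) := by
            intro p hp
            simp [hSdef] at hp
            rcases hp with rfl | rfl | rfl | rfl | rfl | rfl
            exacts [⟨hs1len, hs1X, hs1aX⟩, ⟨hs1len, hs1X, hs1bX⟩,
              ⟨hs2len, hs2X, hs2aX⟩, ⟨hs2len, hs2X, hs2bX⟩,
              ⟨hwlen, hwX', hwX⟩, ⟨hwlen, hwX', hbX⟩]
          have hcnt := cnt (orbitClosure x) n S hS
          rw [hcardS] at hcnt
          omega
  -- now use absorption to get a contradiction with transitivity
  have habs1 := absorb M1 h1 (Or.inl rfl)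
  have habs2 := absorb M2 h2 (Or.inr rfl)
  obtain ⟨p1, hp1⟩ := wordIn_orbitClosure hs1X
  obtain ⟨m2, hm2⟩ := h2.2.1
  have hw2M : WordIn M2 (wordAt m2 0 n) := wordIn_of_mem hm2 0 n
  have hw2X : WordIn (orbitClosure x) (wordAt m2 0 n) := wordIn_mono h2.1 hw2M
  obtain ⟨p2, hp2⟩ := wordIn_orbitClosure hw2X
  have e1 : wordAt x p1 n = s1 := by
    have := occursAt_iff_wordAt.mp hp1
    rwa [hs1len] at this
  have e2 : wordAt x p2 n = wordAt m2 0 n := by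
    have := occursAt_iff_wordAt.mp hp2
    rwa [wordAt_length] at this
  have hxm1 : WordIn M1 (wordAt x p1 n) := by rw [e1]; exact hs1M
  have hxm2 : WordIn M2 (wordAt x p2 n) := by rw [e2]; exact hw2M
  rcases le_total p1 p2 with hle | hle
  · have hsl := slide habs1 hxX hxm1 (p2 - p1).toNat
    rw [show p1 + ((p2 - p1).toNat : ℤ) = p2 by omega] at hsl
    exact hdisjn _ (wordAt_length x p2 n) hsl hxm2
  · have hsl := slide habs2 hxX hxm2 (p1 - p2).toNat
    rw [show p2 + ((p1 - p2).toNat : ℤ) = p1 by omega] at hsl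
    exact hdisjn _ (wordAt_length x p1 n) hxm1 hsl

end Dev5
section Dev6
variable {A : Type*}

lemma final_assembly [Fintype A] [TopologicalSpace A] (X : Set (ℤ → A)) (K n1 : ℕ)
    (hstep : ∀ n, n1 ≤ n → complexity X n + (K + 1) ≤ complexity X (n + 1)) :
    ∃ C : ℤ, ∀ᶠ m : ℕ in atTop, C ≤ (complexity X m : ℤ) - ((K : ℤ) + 1) * m := by
  have grow : ∀ m, n1 ≤ m →
      (complexity X n1 : ℤ) + ((K : ℤ) + 1) * ((m : ℤ) - (n1 : ℤ)) ≤ (complexity X m : ℤ) := by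
    intro m hm
    induction m, hm using Nat.le_induction with
    | base => simp
    | succ m hm ih =>
      have hs' : (complexity X m : ℤ) + ((K : ℤ) + 1) ≤ (complexity X (m + 1) : ℤ) := by
        exact_mod_cast hstep m hm
      push_cast
      push_cast at ih
      linarith
  refine ⟨(complexity X n1 : ℤ) - ((K : ℤ) + 1) * (n1 : ℤ), ?_⟩
  filter_upwards [Filter.eventually_ge_atTop n1] with m hm
  have hg := grow m hm
  have hexp : ((K : ℤ) + 1) * ((m : ℤ) - (n1 : ℤ)) =
      ((K : ℤ) + 1) * (m : ℤ) - ((K : ℤ) + 1) * (n1 : ℤ) := by ring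
  rw [hexp] at hg
  linarith

end Dev6

theorem stmt15' [Fintype A] [TopologicalSpace A] [DiscreteTopology A]
    (X : Set (ℤ → A)) (htrans : ∃ x : ℤ → A, X = orbitClosure x)
    (i : ℕ) (hi : 0 < i)
    (hcard : {M : Set (ℤ → A) | MinimalSubsystem X M}.ncard = 2)
    (hinf : {M : Set (ℤ → A) | MinimalSubsystem X M ∧ M.Infinite}.ncard = i) :
    ∃ C : ℤ, ∀ᶠ m : ℕ in atTop, C ≤ (complexity X m : ℤ) - ((i : ℤ) + 1) * m := by
  obtain ⟨x, rfl⟩ := htrans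
  obtain ⟨M1, M2, hMne, hSeq⟩ := Set.ncard_eq_two.mp hcard
  have hSfin : {M : Set (ℤ → A) | MinimalSubsystem (orbitClosure x) M}.Finite := by
    rw [hSeq]; exact (Set.finite_singleton M2).insert M1
  have hM1min : MinimalSubsystem (orbitClosure x) M1 := by
    have h : M1 ∈ {M : Set (ℤ → A) | MinimalSubsystem (orbitClosure x) M} := by
      rw [hSeq]; exact Set.mem_insert _ _
    exact h
  have hM2min : MinimalSubsystem (orbitClosure x) M2 := by
    have h : M2 ∈ {M : Set (ℤ → A) | MinimalSubsystem (orbitClosure x) M} := by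
      rw [hSeq]; exact Set.mem_insert_of_mem _ rfl
    exact h
  have hsub : {M : Set (ℤ → A) | MinimalSubsystem (orbitClosure x) M ∧ M.Infinite} ⊆
      {M : Set (ℤ → A) | MinimalSubsystem (orbitClosure x) M} := fun M hM => hM.1
  have hile : i ≤ 2 := by
    rw [← hinf, ← hcard]
    exact Set.ncard_le_ncard hsub hSfin
  obtain ⟨n1, hstep⟩ : ∃ n1 : ℕ, ∀ n, n1 ≤ n →
      complexity (orbitClosure x) n + (i + 1) ≤ complexity (orbitClosure x) (n + 1) := by
    rcases (by omega : i = 1 ∨ i = 2) with h1 | h2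
    · subst h1
      obtain ⟨N, hNeq⟩ := Set.ncard_eq_one.mp hinf
      have hNmem : MinimalSubsystem (orbitClosure x) N ∧ N.Infinite := by
        have h : N ∈ {M : Set (ℤ → A) | MinimalSubsystem (orbitClosure x) M ∧ M.Infinite} := by
          rw [hNeq]; rfl
        exact h
      have hNS : N = M1 ∨ N = M2 := by
        have h := hsub hNmem
        rw [hSeq] at h
        simpa using h
      rcases hNS with rfl | rfl
      · exact step_lemma hM1min hM2min hMne hNmem.2 1 (Or.inl rfl)
      · exact step_lemma hM2min hM1min (Ne.symm hMne) hNmem.2 1 (Or.inl rfl)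
    · subst h2
      have heq2 : {M : Set (ℤ → A) | MinimalSubsystem (orbitClosure x) M ∧ M.Infinite} =
          {M : Set (ℤ → A) | MinimalSubsystem (orbitClosure x) M} :=
        Set.eq_of_subset_of_ncard_le hsub (by rw [hcard, hinf]) hSfin
      have hM1inf : M1.Infinite := by
        have h : M1 ∈ {M : Set (ℤ → A) | MinimalSubsystem (orbitClosure x) M ∧ M.Infinite} := by
          rw [heq2]; exact hM1min
        exact h.2
      have hM2inf : M2.Infinite := by
        have h : M2 ∈ {M : Set (ℤ → A) | MinimalSubsystem (orbitClosure x) M ∧ M.Infinite} := by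
          rw [heq2]; exact hM2min
        exact h.2
      exact step_lemma hM1min hM2min hMne hM1inf 2 (Or.inr ⟨rfl, hM2inf⟩)
  exact final_assembly _ i n1 hstep

theorem stmt15 [Fintype A] [TopologicalSpace A] [DiscreteTopology A]
    (X : Set (ℤ → A)) (htrans : ∃ x : ℤ → A, X = orbitClosure x)
    (i : ℕ) (hi : 0 < i)
    (hcard : {M : Set (ℤ → A) | MinimalSubsystem X M}.ncard = 2)
    (hinf : {M : Set (ℤ → A) | MinimalSubsystem X M ∧ M.Infinite}.ncard = i) :
    ∃ C : ℤ, ∀ᶠ m : ℕ in atTop, C ≤ (complexity X m : ℤ) - ((i : ℤ) + 1) * m := by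
  exact stmt15' X htrans i hi hcard hinf
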